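/- Let M be a matroid of rank r on a finite set F and Q a finite set of size r disjoint from F. The basis generating polynomial of the matroid M̃ on Q ⊔ F whose bases are the sets S ⊔ T with S ⊆ Q, T ⊆ F independent in M, |S| + |T| = r, specializes under setting all variables indexed by Q equal to a single variable x and all variables indexed by F equal to y, to the polynomial q(x,y) = Σ_k C(r,k)·I_k(M)·x^{r−k}·y^k, where I_k(M) is the number of independent sets of M of size k. -/

import Mathlib

/-- A family of finsets is the family of bases of a matroid iff it is nonempty and
satisfies the basis exchange axiom. -/
def IsBasisFamily {α : Type*} [DecidableEq α] (B : Finset α → Prop) : Prop :=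
  (∃ b, B b) ∧ ∀ ⦃b₁ b₂⦄, B b₁ → B b₂ → ∀ x ∈ b₁ \ b₂,
    ∃ y ∈ b₂ \ b₁, B (insert y (b₁.erase x))

open scoped Classical

section Aux

variable {F Q : Type*} [DecidableEq F] [DecidableEq Q]

lemma filt_left (S : Finset Q) (T : Finset F) :
    ((S.image Sum.inl ∪ T.image Sum.inr).filter (fun g : Q ⊕ F => g.isLeft = true))
      = S.image Sum.inl := by
  ext x; cases x <;> simp

lemma filt_right (S : Finset Q) (T : Finset F) :
    ((S.image Sum.inl ∪ T.image Sum.inr).filter (fun g : Q ⊕ F => g.isRight = true))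
      = T.image Sum.inr := by
  ext x; cases x <;> simp

lemma union_inj {S₁ S₂ : Finset Q} {T₁ T₂ : Finset F}
    (h : S₁.image Sum.inl ∪ T₁.image Sum.inr = S₂.image Sum.inl ∪ T₂.image Sum.inr) :
    S₁ = S₂ ∧ T₁ = T₂ := by
  constructor
  · have := congrArg (fun b : Finset (Q ⊕ F) => b.filter (fun g => g.isLeft = true)) h
    simp only [filt_left] at this
    exact Finset.image_injective Sum.inl_injective this
  · have := congrArg (fun b : Finset (Q ⊕ F) => b.filter (fun g => g.isRight = true)) h
    simp only [filt_right] at this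
    exact Finset.image_injective Sum.inr_injective this

lemma erase_inl (S : Finset Q) (T : Finset F) (s : Q) :
    (S.image Sum.inl ∪ T.image Sum.inr).erase (Sum.inl s)
      = (S.erase s).image Sum.inl ∪ T.image Sum.inr := by
  ext x; cases x <;> simp <;> tauto

lemma erase_inr (S : Finset Q) (T : Finset F) (t : F) :
    (S.image Sum.inl ∪ T.image Sum.inr).erase (Sum.inr t)
      = S.image Sum.inl ∪ (T.erase t).image Sum.inr := by
  ext x; cases x <;> simp <;> tauto

end Aux

/-- Let `M` be a matroid of rank `r` on `F` and `Q` an `r`-element set. The family of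
sets `S ⊔ T` with `S ⊆ Q`, `T ⊆ F` independent in `M`, `|S| + |T| = r` is the family
of bases of a matroid on `Q ⊔ F`, and its basis generating polynomial specializes
(setting all `Q`-variables to `x` and all `F`-variables to `y`) to
`Σ_k C(r, k) · I_k(M) · x^(r-k) · y^k`. -/
theorem basis_generating_specialization {F Q : Type*} [Fintype F] [Fintype Q]
    [DecidableEq F] [DecidableEq Q]
    (M : Matroid F) (hME : M.E = Set.univ)
    (r : ℕ) (hr : ∀ B, M.IsBase B → B.ncard = r)
    (hQ : Fintype.card Q = r) :
    IsBasisFamily (fun B : Finset (Q ⊕ F) =>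
      ∃ (S : Finset Q) (T : Finset F), M.Indep ↑T ∧ S.card + T.card = r ∧
        B = S.image Sum.inl ∪ T.image Sum.inr) ∧
    ∀ x y : ℝ,
      (∑ B : Finset (Q ⊕ F),
        if ∃ (S : Finset Q) (T : Finset F), M.Indep ↑T ∧ S.card + T.card = r ∧
            B = S.image Sum.inl ∪ T.image Sum.inr then
          x ^ (B.filter (fun g : Q ⊕ F => g.isLeft = true)).card * y ^ (B.filter (fun g : Q ⊕ F => g.isRight = true)).card
        else 0) =
      ∑ k ∈ Finset.range (r + 1),
        ((r.choose k : ℝ) *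
          (Nat.card {T : Finset F // M.Indep ↑T ∧ T.card = k} : ℝ)) *
            x ^ (r - k) * y ^ k := by
  constructor
  · constructor
    · exact ⟨(Finset.univ : Finset Q).image Sum.inl ∪ (∅ : Finset F).image Sum.inr,
        Finset.univ, ∅, by simpa using M.empty_indep, by simp [hQ], rfl⟩
    · rintro b₁ b₂ ⟨S₁, T₁, hT₁, hc₁, rfl⟩ ⟨S₂, T₂, hT₂, hc₂, rfl⟩ z hz
      cases z with
      | inl s =>
        have hs : s ∈ S₁ ∧ s ∉ S₂ := by
          simp only [Finset.mem_sdiff, Finset.mem_union, Finset.mem_image] at hz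
          constructor
          · rcases hz.1 with ⟨a, ha, h⟩ | ⟨a, ha, h⟩
            · exact (Sum.inl_injective h) ▸ ha
            · exact absurd h (by simp)
          · intro hmem; exact hz.2 (Or.inl ⟨s, hmem, rfl⟩)
        by_cases hSS : ∃ s', s' ∈ S₂ ∧ s' ∉ S₁
        · obtain ⟨s', hs'₂, hs'₁⟩ := hSS
          refine ⟨Sum.inl s', by simp [hs'₂, hs'₁], insert s' (S₁.erase s), T₁, hT₁, ?_, ?_⟩
          · rw [Finset.card_insert_of_notMem (by simp [hs'₁]),
              Finset.card_erase_of_mem hs.1]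
            have : 0 < S₁.card := Finset.card_pos.2 ⟨s, hs.1⟩
            omega
          · rw [erase_inl, Finset.image_insert, Finset.insert_union]
        · push_neg at hSS
          have hsub : S₂ ⊆ S₁.erase s := fun a ha =>
            Finset.mem_erase.2 ⟨fun h => hs.2 (h ▸ ha), hSS a ha⟩
          have hle := Finset.card_le_card hsub
          rw [Finset.card_erase_of_mem hs.1] at hle
          have hpos : 0 < S₁.card := Finset.card_pos.2 ⟨s, hs.1⟩
          have hcard : T₁.card < T₂.card := by omega
          obtain ⟨e, he, hei⟩ := hT₁.augment hT₂ (by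
            rw [Set.encard_coe_eq_coe_finsetCard, Set.encard_coe_eq_coe_finsetCard]
            exact_mod_cast hcard)
          simp only [Set.mem_diff, Finset.mem_coe] at he
          refine ⟨Sum.inr e, by simp [he.1, he.2], S₁.erase s, insert e T₁,
            by rw [Finset.coe_insert]; exact hei, ?_, ?_⟩
          · rw [Finset.card_erase_of_mem hs.1, Finset.card_insert_of_notMem he.2]
            omega
          · rw [erase_inl, Finset.image_insert, Finset.union_insert]
      | inr t =>
        have ht : t ∈ T₁ ∧ t ∉ T₂ := by
          simp only [Finset.mem_sdiff, Finset.mem_union, Finset.mem_image] at hz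
          constructor
          · rcases hz.1 with ⟨a, ha, h⟩ | ⟨a, ha, h⟩
            · exact absurd h (by simp)
            · exact (Sum.inr_injective h) ▸ ha
          · intro hmem; exact hz.2 (Or.inr ⟨t, hmem, rfl⟩)
        by_cases hSS : ∃ s', s' ∈ S₂ ∧ s' ∉ S₁
        · obtain ⟨s', hs'₂, hs'₁⟩ := hSS
          refine ⟨Sum.inl s', by simp [hs'₂, hs'₁], insert s' S₁, T₁.erase t,
            hT₁.subset (by simp [Finset.erase_subset]), ?_, ?_⟩
          · rw [Finset.card_insert_of_notMem hs'₁, Finset.card_erase_of_mem ht.1]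
            have : 0 < T₁.card := Finset.card_pos.2 ⟨t, ht.1⟩
            omega
          · rw [erase_inr, Finset.image_insert, Finset.insert_union]
        · push_neg at hSS
          have hle := Finset.card_le_card (fun a ha => hSS a ha : S₂ ⊆ S₁)
          have hpos : 0 < T₁.card := Finset.card_pos.2 ⟨t, ht.1⟩
          have hT₁' : M.Indep ↑(T₁.erase t) := hT₁.subset (by simp [Finset.erase_subset])
          have hcard : (T₁.erase t).card < T₂.card := by
            rw [Finset.card_erase_of_mem ht.1]; omega
          obtain ⟨e, he, hei⟩ := hT₁'.augment hT₂ (by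
            rw [Set.encard_coe_eq_coe_finsetCard, Set.encard_coe_eq_coe_finsetCard]
            exact_mod_cast hcard)
          simp only [Set.mem_diff, Finset.mem_coe, Finset.mem_erase] at he
          have heT₁ : e ∉ T₁ := fun h => he.2 ⟨fun h' => ht.2 (h' ▸ he.1), h⟩
          refine ⟨Sum.inr e, by simp [he.1, heT₁], S₁, insert e (T₁.erase t),
            by rw [Finset.coe_insert]; exact hei, ?_, ?_⟩
          · rw [Finset.card_insert_of_notMem (fun h => heT₁ (Finset.mem_of_mem_erase h)),
              Finset.card_erase_of_mem ht.1]
            omega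
          · rw [erase_inr, Finset.image_insert, Finset.union_insert]
  · intro x y
    have hcardQ : ∀ n, ((Finset.univ : Finset (Finset Q)).filter (fun S => S.card = n)).card
        = (Fintype.card Q).choose n := by
      intro n
      rw [show (Finset.univ : Finset (Finset Q)).filter (fun S => S.card = n)
          = Finset.powersetCard n Finset.univ by
        ext s; simp [Finset.mem_powersetCard, Finset.subset_univ]]
      rw [Finset.card_powersetCard, Finset.card_univ]
    have hIk : ∀ k, (Nat.card {T : Finset F // M.Indep ↑T ∧ T.card = k} : ℕ)
        = ((Finset.univ : Finset (Finset F)).filter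
            (fun T : Finset F => M.Indep (↑T : Set F) ∧ T.card = k)).card := by
      intro k
      rw [Nat.card_eq_fintype_card]
      exact Fintype.card_subtype _
    set cond : Finset Q × Finset F → Prop :=
      fun p => M.Indep ↑p.2 ∧ p.1.card + p.2.card = r with hcond
    have step1 : (∑ B : Finset (Q ⊕ F),
        if ∃ (S : Finset Q) (T : Finset F), M.Indep ↑T ∧ S.card + T.card = r ∧
            B = S.image Sum.inl ∪ T.image Sum.inr then
          x ^ (B.filter (fun g : Q ⊕ F => g.isLeft = true)).card *
            y ^ (B.filter (fun g : Q ⊕ F => g.isRight = true)).card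
        else 0)
        = ∑ p ∈ Finset.univ.filter cond, x ^ p.1.card * y ^ p.2.card := by
      rw [← Finset.sum_filter]
      refine (Finset.sum_bij (fun p _ => p.1.image Sum.inl ∪ p.2.image Sum.inr) ?_ ?_ ?_ ?_).symm
      · intro p hp
        simp only [Finset.mem_filter, hcond] at hp
        simp only [Finset.mem_filter, Finset.mem_univ, true_and]
        exact ⟨p.1, p.2, hp.2.1, hp.2.2, rfl⟩
      · intro p₁ _ p₂ _ h
        obtain ⟨h1, h2⟩ := union_inj h
        exact Prod.ext h1 h2
      · intro B hB
        simp only [Finset.mem_filter, Finset.mem_univ, true_and] at hB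
        obtain ⟨S, T, hT, hc, rfl⟩ := hB
        exact ⟨(S, T), by simp [Finset.mem_filter, hcond, hT, hc], rfl⟩
      · intro p hp
        rw [filt_left, filt_right, Finset.card_image_of_injective _ Sum.inl_injective,
          Finset.card_image_of_injective _ Sum.inr_injective]
    rw [step1]
    rw [← Finset.sum_fiberwise_of_maps_to (t := Finset.range (r + 1))
      (g := fun p : Finset Q × Finset F => p.2.card)
      (fun p hp => by
        simp only [Finset.mem_filter, hcond] at hp
        simp only [Finset.mem_range]; omega)]
    refine Finset.sum_congr rfl (fun k hk => ?_)
    have hkr : k ≤ r := by simpa [Nat.lt_succ_iff] using hk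
    have hfiber : (Finset.univ.filter cond).filter
        (fun p : Finset Q × Finset F => p.2.card = k)
        = (Finset.univ.filter (fun S : Finset Q => S.card = r - k)) ×ˢ
          (Finset.univ.filter (fun T : Finset F => M.Indep ↑T ∧ T.card = k)) := by
      rw [Finset.filter_filter, ← Finset.filter_product, Finset.univ_product_univ]
      refine Finset.filter_congr (fun p _ => ?_)
      simp only [hcond]
      constructor
      · rintro ⟨⟨h1, h2⟩, h3⟩; exact ⟨by omega, h1, h3⟩
      · rintro ⟨h1, h2, h3⟩; exact ⟨⟨h2, by omega⟩, h3⟩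
    rw [hfiber]
    have : ∀ p ∈ (Finset.univ.filter (fun S : Finset Q => S.card = r - k)) ×ˢ
          (Finset.univ.filter (fun T : Finset F => M.Indep ↑T ∧ T.card = k)),
        x ^ (p : Finset Q × Finset F).1.card * y ^ p.2.card = x ^ (r - k) * y ^ k := by
      intro p hp
      simp only [Finset.mem_product, Finset.mem_filter] at hp
      rw [hp.1.2, hp.2.2.2]
    rw [Finset.sum_congr rfl this, Finset.sum_const, Finset.card_product,
      hcardQ (r - k), hQ, Nat.choose_symm hkr, nsmul_eq_mul]
    rw [hIk k]
    push_cast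
    ring
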